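/- Let G be a complete t-partite graph on the vertex set V with parts V_1, …, V_t (two vertices are adjacent if and only if they lie in different parts), let K be a field, and for each i let W_i be a nonempty subset of V_i. Let H be the induced subgraph of G on W_1 ∪ ⋯ ∪ W_t (which is the complete t-partite graph with parts W_1,…,W_t). Then the cut algebra K[H] is an algebra retract of the cut algebra K[G]. -/

import Mathlib

open scoped Classical

noncomputable section

namespace CutPaper

open MvPolynomial

/-- An edge `e` is cut by the partition `A | Aᶜ` if it has exactly one endpoint in `A`. -/
def IsCutEdge {V : Type} (A : Set V) (e : Sym2 V) : Prop :=
  ∃ u v : V, e = s(u, v) ∧ u ∈ A ∧ v ∉ A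

/-- The cut set of `A`: all edges of `G` with exactly one endpoint in `A`. -/
def cutSet {V : Type} (G : SimpleGraph V) (A : Set V) : Set (Sym2 V) :=
  {e ∈ G.edgeSet | IsCutEdge A e}

lemma isCutEdge_compl {V : Type} (A : Set V) (e : Sym2 V) :
    IsCutEdge Aᶜ e ↔ IsCutEdge A e := by
  constructor <;> rintro ⟨u, v, rfl, hu, hv⟩
  · exact ⟨v, u, Sym2.eq_swap, Set.notMem_compl_iff.mp hv, hu⟩
  · exact ⟨v, u, Sym2.eq_swap, hv, not_not_intro hu⟩

/-- Two subsets determine the same unordered partition `A | Aᶜ` of `V`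
iff they are equal or complementary. -/
def partitionSetoid (V : Type) : Setoid (Set V) where
  r A B := B = A ∨ B = Aᶜ
  iseqv := by
    refine ⟨fun A => Or.inl rfl, @fun A B h => ?_, @fun A B C h1 h2 => ?_⟩
    · rcases h with rfl | rfl
      · exact Or.inl rfl
      · exact Or.inr (compl_compl A).symm
    · rcases h1 with rfl | rfl <;> rcases h2 with rfl | rfl
      · exact Or.inl rfl
      · exact Or.inr rfl
      · exact Or.inr rfl
      · exact Or.inl (compl_compl A)

/-- The unordered partitions `A | Aᶜ` of `V`, indexing the variables of `S_G`. -/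
abbrev Partition (V : Type) := Quotient (partitionSetoid V)

variable (K : Type) [CommRing K]

/-- The variable `q_{A|Aᶜ}` of the polynomial ring `S_G`. -/
def qPart {V : Type} (A : Set V) : MvPolynomial (Partition V) K :=
  X (Quotient.mk (partitionSetoid V) A)

/-- The monomial `u_A = ∏_{e ∈ Cut(A)} s_e · ∏_{e ∈ E \ Cut(A)} t_e`;
the variable `s_e` is `X (true, e)` and `t_e` is `X (false, e)`. -/
def cutMonomial {V : Type} [Finite V] (G : SimpleGraph V) (A : Set V) :
    MvPolynomial (Bool × Sym2 V) K :=
  ∏ e ∈ (Set.toFinite G.edgeSet).toFinset,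
    if IsCutEdge A e then X (true, e) else X (false, e)

lemma cutMonomial_compl {V : Type} [Finite V] (G : SimpleGraph V) (A : Set V) :
    cutMonomial K G Aᶜ = cutMonomial K G A := by
  unfold cutMonomial
  refine Finset.prod_congr rfl fun e _ => ?_
  by_cases h : IsCutEdge A e
  · rw [if_pos ((isCutEdge_compl A e).mpr h), if_pos h]
  · rw [if_neg fun hc => h ((isCutEdge_compl A e).mp hc), if_neg h]

/-- The `K`-algebra homomorphism `φ_G : S_G → R_G`, `q_{A|Aᶜ} ↦ u_A`. -/
def phi {V : Type} [Finite V] (G : SimpleGraph V) :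
    MvPolynomial (Partition V) K →ₐ[K] MvPolynomial (Bool × Sym2 V) K :=
  aeval fun p : Partition V =>
    Quotient.lift (cutMonomial K G)
      (fun A B hAB => by
        have h : B = A ∨ B = Aᶜ := hAB
        rcases h with rfl | rfl
        · rfl
        · exact (cutMonomial_compl K G A).symm) p

/-- The cut ideal `I_G = ker φ_G`. -/
def cutIdeal {V : Type} [Finite V] (G : SimpleGraph V) :
    Ideal (MvPolynomial (Partition V) K) :=
  RingHom.ker (phi K G)

/-- The cut algebra `K[G]`, i.e. the image of `φ_G`: the `K`-subalgebra of `R_G`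
generated by the monomials `u_A`. -/
def cutAlgebra {V : Type} [Finite V] (G : SimpleGraph V) :
    Subalgebra K (MvPolynomial (Bool × Sym2 V) K) :=
  Algebra.adjoin K {m | ∃ A : Set V, m = cutMonomial K G A}

/-- The generator `u_A` of the cut algebra, as an element of the cut algebra. -/
def uGen {V : Type} [Finite V] (G : SimpleGraph V) (A : Set V) : ↥(cutAlgebra K G) :=
  ⟨cutMonomial K G A, Algebra.subset_adjoin ⟨A, rfl⟩⟩

/-- An element of `S_G/I` is homogeneous of degree `d` if it is the class of a homogeneous
polynomial of degree `d`. -/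
def QuotHomogeneous {σ : Type} (I : Ideal (MvPolynomial σ K)) (d : ℕ)
    (x : MvPolynomial σ K ⧸ I) : Prop :=
  ∃ f : MvPolynomial σ K, f.IsHomogeneous d ∧ Ideal.Quotient.mk I f = x

/-- The cut algebra of `H` is an algebra retract of the cut algebra of `G`:
there are homogeneous `K`-algebra homomorphisms `ι : K[H] → K[G]` (injective) and
`π : K[G] → K[H]` with `π ∘ ι = id`. -/
def CutAlgebraRetract {V W : Type} [Finite V] [Finite W]
    (H : SimpleGraph W) (G : SimpleGraph V) : Prop :=
  ∃ (ι : (MvPolynomial (Partition W) K ⧸ cutIdeal K H) →ₐ[K]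
      (MvPolynomial (Partition V) K ⧸ cutIdeal K G))
    (π : (MvPolynomial (Partition V) K ⧸ cutIdeal K G) →ₐ[K]
      (MvPolynomial (Partition W) K ⧸ cutIdeal K H)),
    Function.Injective ι ∧
    (∀ d x, QuotHomogeneous K (cutIdeal K H) d x →
      ∃ d', QuotHomogeneous K (cutIdeal K G) d' (ι x)) ∧
    (∀ d x, QuotHomogeneous K (cutIdeal K G) d x →
      ∃ d', QuotHomogeneous K (cutIdeal K H) d' (π x)) ∧
    π.comp ι = AlgHom.id K _

/-- The graph obtained from `G` by contracting the edge `{u, v}`: the vertex `u` is removed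
and merged into `v`. -/
def contractEdge {V : Type} (G : SimpleGraph V) (u v : V) :
    SimpleGraph {x : V // x ≠ u} where
  Adj a b := a ≠ b ∧
    (G.Adj a b ∨ ((a : V) = v ∧ G.Adj u b) ∨ ((b : V) = v ∧ G.Adj a u))
  symm := ⟨by
    rintro a b ⟨hne, h | ⟨ha, h⟩ | ⟨hb, h⟩⟩
    · exact ⟨hne.symm, Or.inl h.symm⟩
    · exact ⟨hne.symm, Or.inr (Or.inr ⟨ha, h.symm⟩)⟩
    · exact ⟨hne.symm, Or.inr (Or.inl ⟨hb, h.symm⟩)⟩⟩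
  loopless := ⟨fun a h => h.1 rfl⟩

/-- The induced subgraph `G_W` is a neighborhood-minor of `G`: `W` and `W' = Wᶜ` are nonempty
and there is a vertex `v ∈ W` with `W ∩ N_G(W') ⊆ N_{G_W}[v]`. -/
def IsNeighborhoodMinor {V : Type} (G : SimpleGraph V) (W : Set V) : Prop :=
  W.Nonempty ∧ Wᶜ.Nonempty ∧
    ∃ v ∈ W, ∀ x ∈ W, (∃ y ∈ Wᶜ, G.Adj y x) → x = v ∨ G.Adj v x

/-- The cut vector `δ_A ∈ {0,1}^E` of the partition `A | Aᶜ`. -/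
def cutVector {V : Type} (G : SimpleGraph V) (A : Set V) : ↥G.edgeSet → ℝ :=
  fun e => if IsCutEdge A (e : Sym2 V) then 1 else 0

/-- The cut polytope `Cut^□(G) ⊆ ℝ^E`: the convex hull of the cut vectors. -/
def cutPolytope {V : Type} (G : SimpleGraph V) : Set (↥G.edgeSet → ℝ) :=
  convexHull ℝ {x | ∃ A : Set V, x = cutVector G A}

/-- `F` is a face of `P`: either a trivial face (`P` or `∅`), or the intersection of `P`
with a supporting hyperplane. -/
def IsFace {α : Type} (P F : Set (α → ℝ)) : Prop :=
  F = P ∨ F = ∅ ∨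
    ∃ (φ : (α → ℝ) →ₗ[ℝ] ℝ) (c : ℝ), φ ≠ 0 ∧
      (∀ x ∈ P, φ x ≤ c) ∧ F = P ∩ {x | φ x = c}

/-- `P` and `Q` are affinely isomorphic: there is a bijective map from `P` onto `Q`
extending to an affine map. -/
def AffinelyIsomorphic {α β : Type} (P : Set (α → ℝ)) (Q : Set (β → ℝ)) : Prop :=
  ∃ f : (α → ℝ) →ᵃ[ℝ] (β → ℝ), Set.InjOn f P ∧ f '' P = Q

/-- The monomial `z · ∏_{e ∈ Cut(A)} y_e` of the polytopal algebra of the cut polytope;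
the variable `z` is `X none` and `y_e` is `X (some e)`. -/
def polytopeMonomial {V : Type} [Finite V] (G : SimpleGraph V) (A : Set V) :
    MvPolynomial (Option (Sym2 V)) K :=
  X none * ∏ e ∈ (Set.toFinite (cutSet G A)).toFinset, X (some e)

/-- The polytopal algebra `K[Cut^□(G)]`: the subalgebra of `K[y_e (e ∈ E), z]` generated by
the monomials `z · y^{δ_A}` attached to the lattice points (= cut vectors) of `Cut^□(G)`. -/
def polytopalAlgebra {V : Type} [Finite V] (G : SimpleGraph V) :
    Subalgebra K (MvPolynomial (Option (Sym2 V)) K) :=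
  Algebra.adjoin K {m | ∃ A : Set V, m = polytopeMonomial K G A}

/-- `G'` is a combinatorial retract of `G`: it is obtained from `G` by a finite sequence of
edge contractions and neighborhood-minors. -/
inductive CombinatorialRetract : ∀ {V W : Type}, SimpleGraph V → SimpleGraph W → Prop
  | refl {V : Type} (G : SimpleGraph V) : CombinatorialRetract G G
  | contract {V W : Type} (G : SimpleGraph V) (u v : V) (huv : G.Adj u v)
      (G' : SimpleGraph W) (h : CombinatorialRetract (contractEdge G u v) G') :
      CombinatorialRetract G G'
  | nbhdMinor {V W : Type} (G : SimpleGraph V) (S : Set V)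
      (hS : IsNeighborhoodMinor G S) (G' : SimpleGraph W)
      (h : CombinatorialRetract (SimpleGraph.induce S G) G') :
      CombinatorialRetract G G'

/- ======== auxiliary development for stmt16 ======== -/
section RetractAux
set_option linter.unusedSectionVars false

lemma isCutEdge_mk' {V : Type} (A : Set V) (x y : V) :
    IsCutEdge A s(x, y) ↔ (x ∈ A ∧ y ∉ A) ∨ (y ∈ A ∧ x ∉ A) := by
  constructor
  · rintro ⟨u, v, h, hu, hv⟩
    rw [Sym2.eq_iff] at h
    rcases h with ⟨rfl, rfl⟩ | ⟨rfl, rfl⟩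
    · exact Or.inl ⟨hu, hv⟩
    · exact Or.inr ⟨hu, hv⟩
  · rintro (⟨hx, hy⟩ | ⟨hy, hx⟩)
    · exact ⟨x, y, rfl, hx, hy⟩
    · exact ⟨y, x, Sym2.eq_swap, hy, hx⟩

variable {V : Type} [Finite V] (K : Type) [CommRing K] (W : Set V) (hat : V → ↥W)

lemma isCutEdge_ext (B : Set ↥W) (e : Sym2 V) :
    IsCutEdge {v | hat v ∈ B} e ↔ IsCutEdge B (Sym2.map hat e) := by
  induction e using Sym2.ind with
  | _ x y => rw [Sym2.map_pair_eq, isCutEdge_mk', isCutEdge_mk']; rfl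

/-- The substitution `R_H → R_G` sending `x_{(b,f)}` to the product of `x_{(b,e)}` over the
edges `e` of `G` lying over `f`. -/
def psiHom (G : SimpleGraph V) :
    MvPolynomial (Bool × Sym2 ↥W) K →ₐ[K] MvPolynomial (Bool × Sym2 V) K :=
  aeval fun p => ∏ e ∈ (Set.toFinite G.edgeSet).toFinset.filter
    (fun e => Sym2.map hat e = p.2), X (p.1, e)

lemma psi_cutMonomial (G : SimpleGraph V)
    (hadj : ∀ e ∈ G.edgeSet, Sym2.map hat e ∈ (SimpleGraph.induce W G).edgeSet) (B : Set ↥W) :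
    psiHom K W hat G (cutMonomial K (SimpleGraph.induce W G) B)
      = cutMonomial K G {v | hat v ∈ B} := by
  unfold cutMonomial
  rw [map_prod]
  have maps : ∀ e ∈ (Set.toFinite G.edgeSet).toFinset,
      Sym2.map hat e ∈ (Set.toFinite (SimpleGraph.induce W G).edgeSet).toFinset := by
    intro e he
    rw [Set.Finite.mem_toFinset] at he ⊢
    exact hadj e he
  rw [← Finset.prod_fiberwise_of_maps_to maps
    (fun e => if IsCutEdge {v | hat v ∈ B} e then (X (true, e) : MvPolynomial (Bool × Sym2 V) K)
      else X (false, e))]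
  refine Finset.prod_congr rfl fun f hf => ?_
  rw [apply_ite (psiHom K W hat G), psiHom, aeval_X, aeval_X]
  by_cases hc : IsCutEdge B f
  · rw [if_pos hc]
    refine Finset.prod_congr rfl fun e he => ?_
    rw [Finset.mem_filter] at he
    rw [if_pos]
    rw [isCutEdge_ext, he.2]
    exact hc
  · rw [if_neg hc]
    refine Finset.prod_congr rfl fun e he => ?_
    rw [Finset.mem_filter] at he
    rw [if_neg]
    rw [isCutEdge_ext, he.2]
    exact hc

end RetractAux
section RetractAux2
set_option linter.unusedSectionVars false

variable {V : Type} [Finite V] (K : Type) [CommRing K] (W : Set V) (hat : V → ↥W)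

/-- The substitution `R_G → R_H` keeping the edges inside `W` and killing the others. -/
def rhoHom : MvPolynomial (Bool × Sym2 V) K →ₐ[K] MvPolynomial (Bool × Sym2 ↥W) K :=
  aeval fun p => if ∀ v ∈ p.2, v ∈ W then X (p.1, Sym2.map hat p.2) else 1

lemma rho_cutMonomial (G : SimpleGraph V) (h_hat : ∀ x : ↥W, hat ↑x = x) (A : Set V) :
    rhoHom K W hat (cutMonomial K G A)
      = cutMonomial K (SimpleGraph.induce W G) {x : ↥W | ↑x ∈ A} := by
  have hcoe : ∀ x (hx : x ∈ W), ((hat x : ↥W) : V) = x := by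
    intro x hx
    have := h_hat ⟨x, hx⟩
    rw [show ((⟨x, hx⟩ : ↥W) : V) = x from rfl] at this
    rw [this]
  unfold cutMonomial
  rw [map_prod]
  have key : ∀ e : Sym2 V, rhoHom K W hat
      (if IsCutEdge A e then (X (true, e) : MvPolynomial (Bool × Sym2 V) K) else X (false, e)) =
      if ∀ v ∈ e, v ∈ W then
        (if IsCutEdge A e then (X (true, Sym2.map hat e) : MvPolynomial (Bool × Sym2 ↥W) K)
          else X (false, Sym2.map hat e))
      else 1 := by
    intro e
    by_cases hw : ∀ v ∈ e, v ∈ W <;> by_cases hc : IsCutEdge A e <;>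
      simp [rhoHom, hw, hc]
  simp only [key]
  -- restrict the product over edges of `G` to the image of the edges of `induce W G`
  rw [show (Set.toFinite G.edgeSet).toFinset.prod (fun e => if ∀ v ∈ e, v ∈ W then
        (if IsCutEdge A e then (X (true, Sym2.map hat e) : MvPolynomial (Bool × Sym2 ↥W) K)
          else X (false, Sym2.map hat e)) else 1)
      = ((Set.toFinite (SimpleGraph.induce W G).edgeSet).toFinset.image
          (Sym2.map (Subtype.val : ↥W → V))).prod (fun e => if ∀ v ∈ e, v ∈ W then
        (if IsCutEdge A e then (X (true, Sym2.map hat e) : MvPolynomial (Bool × Sym2 ↥W) K)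
          else X (false, Sym2.map hat e)) else 1) from ?_]
  · rw [Finset.prod_image (fun f _ g _ h =>
      Sym2.map.injective Subtype.val_injective h)]
    refine Finset.prod_congr rfl fun f hf => ?_
    induction f using Sym2.ind with
    | _ a b =>
      have hw : ∀ v ∈ Sym2.map (Subtype.val : ↥W → V) s(a, b), v ∈ W := by
        rw [Sym2.map_pair_eq]
        intro v hv
        rcases Sym2.mem_iff.mp hv with rfl | rfl
        exacts [a.2, b.2]
      rw [if_pos hw]
      have hmap : Sym2.map hat (Sym2.map (Subtype.val : ↥W → V) s(a, b)) = s(a, b) := by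
        rw [Sym2.map_pair_eq, Sym2.map_pair_eq, h_hat a, h_hat b]
      rw [hmap]
      have hcut : IsCutEdge A (Sym2.map (Subtype.val : ↥W → V) s(a, b)) ↔
          IsCutEdge {x : ↥W | ↑x ∈ A} s(a, b) := by
        rw [Sym2.map_pair_eq, isCutEdge_mk', isCutEdge_mk']
        rfl
      rw [if_congr hcut rfl rfl]
  · symm
    refine Finset.prod_subset ?_ ?_
    · intro f hf
      rw [Finset.mem_image] at hf
      obtain ⟨g, hg, rfl⟩ := hf
      rw [Set.Finite.mem_toFinset] at hg ⊢
      induction g using Sym2.ind with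
      | _ a b => exact hg
    · intro e he hne
      by_cases hw : ∀ v ∈ e, v ∈ W
      · exfalso
        apply hne
        rw [Finset.mem_image]
        refine ⟨Sym2.map hat e, ?_, ?_⟩
        · rw [Set.Finite.mem_toFinset] at he ⊢
          induction e using Sym2.ind with
          | _ x y =>
            rw [SimpleGraph.mem_edgeSet] at he
            rw [Sym2.map_pair_eq, SimpleGraph.mem_edgeSet]
            show G.Adj ↑(hat x) ↑(hat y)
            rw [hcoe x (hw x (Sym2.mem_mk_left x y)), hcoe y (hw y (Sym2.mem_mk_right x y))]
            exact he
        · induction e using Sym2.ind with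
          | _ x y =>
            rw [Sym2.map_pair_eq, Sym2.map_pair_eq,
              hcoe x (hw x (Sym2.mem_mk_left x y)), hcoe y (hw y (Sym2.mem_mk_right x y))]
      · rw [if_neg hw]

end RetractAux2
section RetractAux3
set_option linter.unusedSectionVars false

variable {V : Type} [Finite V] (K : Type) [CommRing K] (W : Set V) (hat : V → ↥W)

/-- Extension of partitions along `hat`. -/
def extQ : Partition ↥W → Partition V :=
  Quotient.lift (fun B => Quotient.mk (partitionSetoid V) {v | hat v ∈ B})
    (fun A B h => by
      refine Quotient.sound ?_
      rcases (h : B = A ∨ B = Aᶜ) with rfl | rfl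
      · exact Or.inl rfl
      · exact Or.inr rfl)

/-- Restriction of partitions to `W`. -/
def restrictQ : Partition V → Partition ↥W :=
  Quotient.lift (fun A => Quotient.mk (partitionSetoid ↥W) {x : ↥W | ↑x ∈ A})
    (fun A B h => by
      refine Quotient.sound ?_
      rcases (h : B = A ∨ B = Aᶜ) with rfl | rfl
      · exact Or.inl rfl
      · exact Or.inr rfl)

lemma phi_comp_ext (G : SimpleGraph V)
    (hadj : ∀ e ∈ G.edgeSet, Sym2.map hat e ∈ (SimpleGraph.induce W G).edgeSet) :
    (phi K G).comp (rename (extQ W hat)) =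
      (psiHom K W hat G).comp (phi K (SimpleGraph.induce W G)) := by
  apply MvPolynomial.algHom_ext
  intro q
  induction q using Quotient.ind with
  | _ B =>
    rw [AlgHom.comp_apply, AlgHom.comp_apply, rename_X]
    show phi K G (X (Quotient.mk (partitionSetoid V) {v | hat v ∈ B})) = _
    rw [phi, aeval_X, phi, aeval_X]
    exact (psi_cutMonomial K W hat G hadj B).symm

lemma phi_comp_restrict (G : SimpleGraph V) (h_hat : ∀ x : ↥W, hat ↑x = x) :
    (phi K (SimpleGraph.induce W G)).comp (rename (restrictQ W)) =
      (rhoHom K W hat).comp (phi K G) := by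
  apply MvPolynomial.algHom_ext
  intro q
  induction q using Quotient.ind with
  | _ A =>
    rw [AlgHom.comp_apply, AlgHom.comp_apply, rename_X]
    show phi K (SimpleGraph.induce W G) (X (Quotient.mk (partitionSetoid ↥W)
      {x : ↥W | ↑x ∈ A})) = _
    rw [phi, aeval_X, phi, aeval_X]
    exact (rho_cutMonomial K W hat G h_hat A).symm

end RetractAux3
theorem stmt16 {V : Type} [Fintype V] [Nonempty V] (K : Type) [Field K]
    (t : ℕ) (part : V → Fin t) (hsurj : Function.Surjective part)
    (W : Set V) (hW : ∀ i : Fin t, ∃ w ∈ W, part w = i) :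
    CutAlgebraRetract K
      (SimpleGraph.induce W (SimpleGraph.comap part (⊤ : SimpleGraph (Fin t))))
      (SimpleGraph.comap part (⊤ : SimpleGraph (Fin t))) := by
  classical
  set G := SimpleGraph.comap part (⊤ : SimpleGraph (Fin t)) with hGdef
  choose w hwW hwpart using hW
  set hat : V → ↥W := fun v => if h : v ∈ W then ⟨v, h⟩ else ⟨w (part v), hwW _⟩ with hhatdef
  have h_hat : ∀ x : ↥W, hat ↑x = x := by
    intro x
    simp only [hhatdef]
    rw [dif_pos x.2]
  have hpart : ∀ v, part ↑(hat v) = part v := by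
    intro v
    by_cases h : v ∈ W
    · simp [hhatdef, h]
    · simp [hhatdef, h, hwpart]
  have hadj : ∀ e ∈ G.edgeSet, Sym2.map hat e ∈ (SimpleGraph.induce W G).edgeSet := by
    intro e he
    induction e using Sym2.ind with
    | _ x y =>
      rw [SimpleGraph.mem_edgeSet] at he
      rw [Sym2.map_pair_eq, SimpleGraph.mem_edgeSet]
      show G.Adj ↑(hat x) ↑(hat y)
      simp only [hGdef, SimpleGraph.comap_adj, SimpleGraph.top_adj] at he ⊢
      rw [hpart, hpart]
      exact he
  have sq1 := phi_comp_ext K W hat G hadj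
  have sq2 := phi_comp_restrict K W hat G h_hat
  have hkerι : ∀ a ∈ cutIdeal K (SimpleGraph.induce W G),
      ((Ideal.Quotient.mkₐ K (cutIdeal K G)).comp (rename (extQ W hat))) a = 0 := by
    intro a ha
    rw [cutIdeal, RingHom.mem_ker] at ha
    have h1 : phi K G (rename (extQ W hat) a) = 0 := by
      have h2 := AlgHom.congr_fun sq1 a
      rw [AlgHom.comp_apply, AlgHom.comp_apply] at h2
      rw [h2, show phi K (SimpleGraph.induce W G) a = 0 from ha, map_zero]
    rw [AlgHom.comp_apply, Ideal.Quotient.mkₐ_eq_mk, Ideal.Quotient.eq_zero_iff_mem,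
      cutIdeal, RingHom.mem_ker]
    exact h1
  have hkerπ : ∀ a ∈ cutIdeal K G,
      ((Ideal.Quotient.mkₐ K (cutIdeal K (SimpleGraph.induce W G))).comp
        (rename (restrictQ W))) a = 0 := by
    intro a ha
    rw [cutIdeal, RingHom.mem_ker] at ha
    have h1 : phi K (SimpleGraph.induce W G) (rename (restrictQ W) a) = 0 := by
      have h2 := AlgHom.congr_fun sq2 a
      rw [AlgHom.comp_apply, AlgHom.comp_apply] at h2
      rw [h2, show phi K G a = 0 from ha, map_zero]
    rw [AlgHom.comp_apply, Ideal.Quotient.mkₐ_eq_mk, Ideal.Quotient.eq_zero_iff_mem,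
      cutIdeal, RingHom.mem_ker]
    exact h1
  set ιbar := Ideal.Quotient.liftₐ (cutIdeal K (SimpleGraph.induce W G))
    ((Ideal.Quotient.mkₐ K (cutIdeal K G)).comp (rename (extQ W hat))) hkerι with hιdef
  set πbar := Ideal.Quotient.liftₐ (cutIdeal K G)
    ((Ideal.Quotient.mkₐ K (cutIdeal K (SimpleGraph.induce W G))).comp
      (rename (restrictQ W))) hkerπ with hπdef
  have e1 : ∀ f, ιbar (Ideal.Quotient.mk (cutIdeal K (SimpleGraph.induce W G)) f) =
      Ideal.Quotient.mk (cutIdeal K G) (rename (extQ W hat) f) := by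
    intro f
    rw [hιdef, Ideal.Quotient.liftₐ_apply]
    rfl
  have e2 : ∀ f, πbar (Ideal.Quotient.mk (cutIdeal K G) f) =
      Ideal.Quotient.mk (cutIdeal K (SimpleGraph.induce W G)) (rename (restrictQ W) f) := by
    intro f
    rw [hπdef, Ideal.Quotient.liftₐ_apply]
    rfl
  have hre : (restrictQ W ∘ extQ W hat) = id := by
    funext q
    induction q using Quotient.ind with
    | _ B =>
      show Quotient.mk (partitionSetoid ↥W) {x : ↥W | (↑x : V) ∈ {v | hat v ∈ B}} =
        Quotient.mk (partitionSetoid ↥W) B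
      have hset : {x : ↥W | (↑x : V) ∈ {v | hat v ∈ B}} = B := by
        ext x
        simp only [Set.mem_setOf_eq]
        rw [h_hat x]
      rw [hset]
  have hli : ∀ x, πbar (ιbar x) = x := by
    intro x
    obtain ⟨f, rfl⟩ := Ideal.Quotient.mk_surjective x
    rw [e1, e2, rename_rename, hre, rename_id, AlgHom.id_apply]
  refine ⟨ιbar, πbar, Function.LeftInverse.injective hli, ?_, ?_, AlgHom.ext hli⟩
  · rintro d x ⟨f, hf, rfl⟩
    exact ⟨d, rename (extQ W hat) f, hf.rename_isHomogeneous, (e1 f).symm⟩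
  · rintro d x ⟨f, hf, rfl⟩
    exact ⟨d, rename (restrictQ W) f, hf.rename_isHomogeneous, (e2 f).symm⟩

end CutPaper
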